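/- arXiv:2008.11356 — 2 statements merged into one kernel-verified Lean document; each statement's English description precedes it below -/
import Mathlib

section
/- For N = 2 users with interference-plus-noise terms I_1, I_2 > 0 and power budget Φ > 0, the quantities β_1 = I_1·γ + I_2·γ² and β_2 = I_2·γ with γ = (√(4·I_2·Φ + (I_1+I_2)²) − I_1 − I_2)/(2·I_2) satisfy β_1 + β_2 = Φ, β_1 > 0, and β_2 > 0. -/
theorem relaying_power_feasibility (I₁ I₂ Φ : ℝ) (hI₁ : 0 < I₁) (hI₂ : 0 < I₂)
    (hΦ : 0 < Φ)
    (γ : ℝ) (hγ : γ = (Real.sqrt (4 * I₂ * Φ + (I₁ + I₂) ^ 2) - I₁ - I₂) / (2 * I₂))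
    (β₁ β₂ : ℝ) (hβ₁ : β₁ = I₁ * γ + I₂ * γ ^ 2) (hβ₂ : β₂ = I₂ * γ) :
    β₁ + β₂ = Φ ∧ 0 < β₁ ∧ 0 < β₂ := by
  set s := Real.sqrt (4 * I₂ * Φ + (I₁ + I₂) ^ 2) with hs
  have hnn : 0 ≤ 4 * I₂ * Φ + (I₁ + I₂) ^ 2 := by positivity
  have hsq : s ^ 2 = 4 * I₂ * Φ + (I₁ + I₂) ^ 2 := Real.sq_sqrt hnn
  have hsgt : I₁ + I₂ < s := by
    have h1 : (I₁ + I₂) ^ 2 < s ^ 2 := by nlinarith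
    nlinarith [Real.sqrt_nonneg (4 * I₂ * Φ + (I₁ + I₂) ^ 2)]
  have hγpos : 0 < γ := by
    rw [hγ]
    apply div_pos <;> nlinarith
  have h2 : (2 : ℝ) * I₂ ≠ 0 := by positivity
  have hγ' : 2 * I₂ * γ = s - I₁ - I₂ := by
    rw [hγ]; field_simp
  refine ⟨?_, ?_, ?_⟩
  · have h3 : (2 * I₂ * γ) ^ 2 = (s - I₁ - I₂) ^ 2 := by rw [hγ']
    rw [hβ₁, hβ₂]; nlinarith [h3, hsq, hγ']
  · rw [hβ₁]; nlinarith
  · rw [hβ₂]; positivity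
end

section
/- Let X and Z be independent, X ~ Gamma(x₀, x₀) and Z ~ Gamma(z₀, z₀) with positive-integer shapes x₀, z₀, and let a, b ≥ 0 with at least one positive. Then P[X < a·Z + b] = 1 − (z₀)^{z₀}·e^{−x₀ b}/Γ(z₀) · Σ_{q=0}^{x₀−1} (x₀)^q/q! · Σ_{l=0}^{q} C(q,l) b^{q−l} a^l Γ(z₀+l)/(z₀ + x₀ a)^{z₀+l}. -/
open MeasureTheory ProbabilityTheory Real Set Finset in
lemma sum_shift_fact (k : ℕ) (u : ℝ) :
    ∑ q ∈ Finset.range (k + 1), (q : ℝ) * u ^ (q - 1) / (Nat.factorial q) =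
      ∑ q ∈ Finset.range k, u ^ q / (Nat.factorial q) := by
  rw [Finset.sum_range_succ']
  simp only [Nat.cast_zero, Nat.factorial_zero, Nat.cast_one, zero_mul, zero_div, add_zero]
  refine Finset.sum_congr rfl fun i _ => ?_
  have : (Nat.factorial (i+1) : ℝ) = (i+1) * Nat.factorial i := by
    rw [Nat.factorial_succ]; push_cast; ring
  rw [this]
  have hi1 : ((i:ℝ)+1) ≠ 0 := by positivity
  simp only [Nat.add_sub_cancel, Nat.cast_add, Nat.cast_one]
  field_simp

open MeasureTheory ProbabilityTheory Real Set Finset in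
lemma hasDerivAt_erlangF (k : ℕ) (hk : 0 < k) (r t : ℝ) :
    HasDerivAt (fun t : ℝ => -(Real.exp (-(r*t)) *
        ∑ q ∈ Finset.range k, (r*t) ^ q / (Nat.factorial q)))
      (r ^ k / (Nat.factorial (k-1)) * t ^ (k-1) * Real.exp (-(r*t))) t := by
  obtain ⟨m, rfl⟩ : ∃ m, k = m + 1 := ⟨k - 1, (Nat.succ_pred_eq_of_pos hk).symm⟩
  have hrt : HasDerivAt (fun t : ℝ => r * t) r t := by
    simpa using (hasDerivAt_id t).const_mul r
  have hexp : HasDerivAt (fun t : ℝ => Real.exp (-(r*t))) (Real.exp (-(r*t)) * (-r)) t :=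
    hrt.neg.exp
  have hsum : HasDerivAt (fun t : ℝ => ∑ q ∈ Finset.range (m+1), (r*t) ^ q / (Nat.factorial q))
      (∑ q ∈ Finset.range (m+1), (q : ℝ) * (r*t) ^ (q-1) * r / (Nat.factorial q)) t := by
    apply HasDerivAt.fun_sum
    intro q _
    exact (hrt.pow q).div_const _
  have := (hexp.mul hsum).neg
  refine this.congr_deriv ?_
  have h1 : ∑ q ∈ Finset.range (m+1), (q : ℝ) * (r*t) ^ (q-1) * r / (Nat.factorial q)
      = r * ∑ q ∈ Finset.range m, (r*t) ^ q / (Nat.factorial q) := by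
    rw [← sum_shift_fact m (r*t), Finset.mul_sum]
    exact Finset.sum_congr rfl fun q _ => by ring
  rw [h1, Finset.sum_range_succ]
  simp only [Nat.add_sub_cancel]
  rw [mul_pow]
  field_simp
  ring

open MeasureTheory ProbabilityTheory Real Set Finset in
lemma gammaPDFReal_nat (k : ℕ) (hk : 0 < k) (r x : ℝ) (hr : 0 < r) (hx : 0 ≤ x) :
    gammaPDFReal k r x = r ^ k / (Nat.factorial (k-1)) * x ^ (k-1) * Real.exp (-(r*x)) := by
  obtain ⟨m, rfl⟩ : ∃ m, k = m + 1 := ⟨k - 1, (Nat.succ_pred_eq_of_pos hk).symm⟩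
  rw [gammaPDFReal, if_pos hx]
  simp only [Nat.cast_add, Nat.cast_one, add_sub_cancel_right, Nat.add_sub_cancel]
  rw [Real.Gamma_nat_eq_factorial, Real.rpow_natCast]
  have : ((m:ℝ) + 1) = ((m+1 : ℕ) : ℝ) := by push_cast; ring
  rw [this, Real.rpow_natCast]

open MeasureTheory ProbabilityTheory Real Set Finset in
lemma erlang_cdf (k : ℕ) (hk : 0 < k) (r t : ℝ) (hr : 0 < r) (ht : 0 ≤ t) :
    gammaMeasure k r (Iio t) = ENNReal.ofReal
      (1 - Real.exp (-(r*t)) * ∑ q ∈ Finset.range k, (r*t) ^ q / (Nat.factorial q)) := by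
  set f : ℝ → ℝ := fun x => r ^ k / (Nat.factorial (k-1)) * x ^ (k-1) * Real.exp (-(r*x)) with hf
  have hfc : Continuous f := by fun_prop
  rw [gammaMeasure, withDensity_apply _ measurableSet_Iio,
    ← Iio_union_Ico_eq_Iio ht, lintegral_union measurableSet_Ico
      (by simp [Set.disjoint_iff_forall_ne, Set.mem_Iio, Set.mem_Ico]; intros; linarith),
    lintegral_gammaPDF_of_nonpos le_rfl, zero_add]
  have hcongr : ∫⁻ x in Ico 0 t, gammaPDF k r x = ∫⁻ x in Ico 0 t, ENNReal.ofReal (f x) := by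
    refine setLIntegral_congr_fun measurableSet_Ico (fun x hx => ?_)
    rw [gammaPDF, gammaPDFReal_nat k hk r x hr hx.1]
  rw [hcongr]
  have hint : IntegrableOn f (Ico 0 t) volume :=
    (hfc.integrableOn_Icc (a := 0) (b := t)).mono_set Ico_subset_Icc_self
  rw [← ofReal_integral_eq_lintegral_ofReal hint
    ((ae_restrict_iff' measurableSet_Ico).mpr (ae_of_all _ fun x hx => by
      have hx0 : 0 ≤ x := hx.1; positivity))]
  congr 1
  have h2 : ∫ x in Ico 0 t, f x = ∫ x in (0:ℝ)..t, f x := by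
    rw [integral_Ico_eq_integral_Ioo, intervalIntegral.integral_of_le ht,
      integral_Ioc_eq_integral_Ioo]
  rw [h2, intervalIntegral.integral_eq_sub_of_hasDerivAt
    (f := fun t : ℝ => -(Real.exp (-(r*t)) * ∑ q ∈ Finset.range k, (r*t) ^ q / (Nat.factorial q)))
    (fun x _ => hasDerivAt_erlangF k hk r x) (hfc.intervalIntegrable 0 t)]
  have h0 : ∑ q ∈ Finset.range k, (r*(0:ℝ)) ^ q / (Nat.factorial q) = 1 := by
    rw [Finset.sum_eq_single 0]
    · simp
    · intro q _ hq; simp [zero_pow hq]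
    · intro h; exact absurd (Finset.mem_range.2 hk) h
  rw [mul_zero] at h0  -- adjust?
  simp only [mul_zero, h0]
  simp
  ring

open MeasureTheory ProbabilityTheory Real Set Finset in
lemma integrable_moment (n : ℕ) (c : ℝ) (hc : 0 < c) :
    IntegrableOn (fun z : ℝ => z ^ n * Real.exp (-(c*z))) (Ioi 0) volume := by
  have := integrableOn_rpow_mul_exp_neg_mul_rpow (p := 1) (s := n) (b := c)
    (by have := Nat.cast_nonneg (α := ℝ) n; linarith) one_pos hc
  refine this.congr_fun (fun x hx => ?_) measurableSet_Ioi
  dsimp only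
  rw [Real.rpow_one, Real.rpow_natCast, neg_mul]

open MeasureTheory ProbabilityTheory Real Set Finset in
lemma moment_integral (n : ℕ) (c : ℝ) (hc : 0 < c) :
    ∫ z in Ioi 0, z ^ n * Real.exp (-(c*z)) = Real.Gamma (n+1) / c ^ (n+1) := by
  have h := Real.integral_rpow_mul_exp_neg_mul_Ioi (a := (n:ℝ)+1) (r := c)
    (by positivity) hc
  have hcongr : ∫ t in Ioi 0, t ^ ((n:ℝ)+1-1) * Real.exp (-(c*t))
      = ∫ z in Ioi 0, z ^ n * Real.exp (-(c*z)) := by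
    refine setIntegral_congr_fun measurableSet_Ioi (fun x hx => ?_)
    rw [add_sub_cancel_right, Real.rpow_natCast]
  rw [hcongr] at h
  rw [h]
  have : ((n:ℝ)+1) = ((n+1 : ℕ) : ℝ) := by push_cast; ring
  rw [this, Real.rpow_natCast, div_pow, one_pow]
  ring

open MeasureTheory ProbabilityTheory in
theorem gamma_affine_cross_prob {Ω : Type*} [MeasurableSpace Ω]
    (μ : Measure Ω) [IsProbabilityMeasure μ]
    (X Z : Ω → ℝ) (hX : Measurable X) (hZ : Measurable Z)
    (x₀ z₀ : ℕ) (hx₀ : 0 < x₀) (hz₀ : 0 < z₀)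
    (hXlaw : μ.map X = gammaMeasure x₀ x₀)
    (hZlaw : μ.map Z = gammaMeasure z₀ z₀)
    (hIndep : IndepFun X Z μ)
    (a b : ℝ) (ha : 0 ≤ a) (hb : 0 ≤ b) (hab : 0 < a ∨ 0 < b) :
    (μ {ω | X ω < a * Z ω + b}).toReal
      = 1 - (z₀ : ℝ) ^ (z₀ : ℕ) * Real.exp (-(x₀ : ℝ) * b) / Real.Gamma z₀ *
          ∑ q ∈ Finset.range x₀, (x₀ : ℝ) ^ q / (Nat.factorial q : ℝ) *
            ∑ l ∈ Finset.range (q + 1),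
              (q.choose l : ℝ) * b ^ (q - l) * a ^ l * Real.Gamma (z₀ + l) /
                ((z₀ : ℝ) + (x₀ : ℝ) * a) ^ ((z₀ : ℕ) + l) := by
  obtain ⟨m, rfl⟩ : ∃ m, z₀ = m + 1 := ⟨z₀ - 1, (Nat.succ_pred_eq_of_pos hz₀).symm⟩
  have hx₀R : (0:ℝ) < x₀ := by exact_mod_cast hx₀
  have hz₀R : (0:ℝ) < ((m+1 : ℕ) : ℝ) := by exact_mod_cast hz₀
  have hPX : IsProbabilityMeasure (gammaMeasure (x₀:ℝ) x₀) :=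
    isProbabilityMeasure_gammaMeasure hx₀R hx₀R
  have hPZ : IsProbabilityMeasure (gammaMeasure ((m+1:ℕ):ℝ) ((m+1:ℕ):ℝ)) :=
    isProbabilityMeasure_gammaMeasure hz₀R hz₀R
  set ν := gammaMeasure ((m+1:ℕ):ℝ) ((m+1:ℕ):ℝ) with hν
  set h : ℝ → ℝ := fun z => Real.exp (-((x₀:ℝ)*(a*z+b))) *
      ∑ q ∈ Finset.range x₀, ((x₀:ℝ)*(a*z+b)) ^ q / (Nat.factorial q) with hh_def
  have hhc : Continuous h := by
    apply Continuous.mul (by fun_prop)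
    exact continuous_finset_sum _ fun q _ => by fun_prop
  have hsp : MeasurableSet {p : ℝ × ℝ | p.1 < a * p.2 + b} :=
    measurableSet_lt measurable_fst ((measurable_snd.const_mul a).add_const b)
  have hev : μ {ω | X ω < a * Z ω + b}
      = ∫⁻ z, gammaMeasure (x₀:ℝ) (x₀:ℝ) (Set.Iio (a * z + b)) ∂ν := by
    have h1 : μ {ω | X ω < a * Z ω + b}
        = μ.map (fun ω => (X ω, Z ω)) {p : ℝ × ℝ | p.1 < a * p.2 + b} := by
      rw [Measure.map_apply (hX.prodMk hZ) hsp]; rfl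
    have hmap : μ.map (fun ω => (X ω, Z ω)) = (gammaMeasure (x₀:ℝ) (x₀:ℝ)).prod ν := by
      rw [← hXlaw, ← hZlaw]
      exact (indepFun_iff_map_prod_eq_prod_map_map hX.aemeasurable hZ.aemeasurable).1 hIndep
    rw [h1, hmap, Measure.prod_apply_symm hsp]
    rfl
  have hz0 : ∀ᵐ z ∂ν, 0 ≤ z := by
    rw [ae_iff]
    have hset : {z : ℝ | ¬ 0 ≤ z} = Set.Iio 0 := by ext x; simp [not_le]
    rw [hset, hν, gammaMeasure, withDensity_apply _ measurableSet_Iio]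
    exact lintegral_gammaPDF_of_nonpos le_rfl
  have h_nonneg : ∀ z : ℝ, 0 ≤ z → 0 ≤ h z := by
    intro z hz
    have h1 : 0 ≤ a * z + b := by positivity
    apply mul_nonneg (Real.exp_nonneg _)
    exact Finset.sum_nonneg fun q _ => by positivity
  have h_le_one : ∀ z : ℝ, 0 ≤ z → h z ≤ 1 := by
    intro z hz
    have h1 : 0 ≤ (x₀:ℝ) * (a*z+b) := by positivity
    calc Real.exp (-((x₀:ℝ)*(a*z+b))) *
          ∑ q ∈ Finset.range x₀, ((x₀:ℝ)*(a*z+b)) ^ q / (Nat.factorial q)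
        ≤ Real.exp (-((x₀:ℝ)*(a*z+b))) * Real.exp ((x₀:ℝ)*(a*z+b)) := by
          apply mul_le_mul_of_nonneg_left (Real.sum_le_exp_of_nonneg h1 x₀) (Real.exp_nonneg _)
      _ = 1 := by rw [← Real.exp_add]; simp
  have hcdf : ∀ᵐ z ∂ν, gammaMeasure (x₀:ℝ) (x₀:ℝ) (Set.Iio (a*z+b))
      = 1 - ENNReal.ofReal (h z) := by
    filter_upwards [hz0] with z hz
    have hazb : 0 ≤ a*z+b := by positivity
    rw [erlang_cdf x₀ hx₀ (x₀:ℝ) (a*z+b) hx₀R hazb,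
      ENNReal.ofReal_sub _ (h_nonneg z hz), ENNReal.ofReal_one]
  have hmeas_h : Measurable fun z => ENNReal.ofReal (h z) := hhc.measurable.ennreal_ofReal
  have h_ofReal_le : ∀ᵐ z ∂ν, ENNReal.ofReal (h z) ≤ 1 := by
    filter_upwards [hz0] with z hz
    simpa using ENNReal.ofReal_le_one.mpr (h_le_one z hz)
  set I := ∫⁻ z, ENNReal.ofReal (h z) ∂ν with hI
  have hI_le : I ≤ 1 := by
    calc I ≤ ∫⁻ _, 1 ∂ν := lintegral_mono_ae h_ofReal_le
      _ = 1 := by simp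
  have hmain : μ {ω | X ω < a * Z ω + b} = 1 - I := by
    rw [hev, lintegral_congr_ae hcdf,
      lintegral_sub hmeas_h (lt_of_le_of_lt (le_trans (le_of_eq hI.symm) hI_le)
        ENNReal.one_lt_top).ne h_ofReal_le]
    simp [hI]
  rw [hmain, ENNReal.toReal_sub_of_le hI_le ENNReal.one_ne_top, ENNReal.toReal_one]
  congr 1
  -- Now compute I.toReal
  have hpdfmeas : Measurable (gammaPDF ((m+1:ℕ):ℝ) ((m+1:ℕ):ℝ)) :=
    (measurable_gammaPDFReal _ _).ennreal_ofReal
  set g : ℝ → ℝ := fun z => gammaPDFReal ((m+1:ℕ):ℝ) ((m+1:ℕ):ℝ) z * h z with hg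
  have hgm : Measurable g := (measurable_gammaPDFReal _ _).mul hhc.measurable
  have hg_nonneg : ∀ z : ℝ, 0 ≤ z → 0 ≤ g z := fun z hz =>
    mul_nonneg (gammaPDFReal_nonneg hz₀R hz₀R z) (h_nonneg z hz)
  have hI2 : I = ∫⁻ z in Set.Ioi 0, ENNReal.ofReal (g z) ∂volume := by
    rw [hI, hν, gammaMeasure, lintegral_withDensity_eq_lintegral_mul _ hpdfmeas hmeas_h]
    have h1 : ∀ z : ℝ, (gammaPDF ((m+1:ℕ):ℝ) ((m+1:ℕ):ℝ) * fun z => ENNReal.ofReal (h z)) z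
        = ENNReal.ofReal (g z) := fun z => by
      simp only [Pi.mul_apply, hg, gammaPDF,
        ← ENNReal.ofReal_mul (gammaPDFReal_nonneg hz₀R hz₀R z)]
    simp_rw [h1]
    rw [← lintegral_add_compl (fun z => ENNReal.ofReal (g z)) measurableSet_Ici (μ := volume),
      Set.compl_Ici]
    have h2 : ∫⁻ z in Set.Iio 0, ENNReal.ofReal (g z) = 0 := by
      rw [setLIntegral_congr_fun measurableSet_Iio
        (fun z (hz : z < 0) => ?_), lintegral_zero]
      simp only [hg]
      rw [gammaPDFReal, if_neg (not_le.mpr hz), zero_mul, ENNReal.ofReal_zero]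
    rw [h2, add_zero, setLIntegral_congr (Ioi_ae_eq_Ici (a := (0:ℝ))).symm]
  have hI3 : I.toReal = ∫ z in Set.Ioi 0, g z := by
    rw [hI2, integral_eq_lintegral_of_nonneg_ae
      ((ae_restrict_iff' measurableSet_Ioi).mpr (ae_of_all _ fun z hz =>
        hg_nonneg z (le_of_lt hz))) hgm.aestronglyMeasurable.restrict]
  have hCpos : (0:ℝ) < ((m+1:ℕ):ℝ) + (x₀:ℝ) * a := by positivity
  set c : ℕ → ℕ → ℝ := fun q l => ((m+1:ℕ):ℝ)^(m+1)/(Nat.factorial m) *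
      Real.exp (-((x₀:ℝ)*b)) * ((x₀:ℝ)^q/(Nat.factorial q)) * (q.choose l) *
      b^(q-l) * a^l with hc
  have key : ∀ z ∈ Set.Ioi (0:ℝ), g z = ∑ q ∈ Finset.range x₀, ∑ l ∈ Finset.range (q+1),
      c q l * (z ^ (m+l) * Real.exp (-((((m+1:ℕ):ℝ) + (x₀:ℝ)*a)*z))) := by
    intro z hz
    rw [Set.mem_Ioi] at hz
    have e1 : Real.exp (-((x₀:ℝ)*(a*z+b)))
        = Real.exp (-((x₀:ℝ)*b)) * Real.exp (-((x₀:ℝ)*a*z)) := by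
      rw [← Real.exp_add]; ring_nf
    have e2 : ∀ w : ℝ, Real.exp (-((((m+1:ℕ):ℝ) + (x₀:ℝ)*a)*w))
        = Real.exp (-(((m+1:ℕ):ℝ)*w)) * Real.exp (-((x₀:ℝ)*a*w)) := fun w => by
      rw [← Real.exp_add]; ring_nf
    simp only [hg, hh_def]
    rw [gammaPDFReal_nat (m+1) hz₀ ((m+1:ℕ):ℝ) z hz₀R (le_of_lt hz)]
    simp only [Nat.add_sub_cancel]
    simp only [Finset.mul_sum]
    refine Finset.sum_congr rfl fun q hq => ?_
    rw [mul_pow, add_pow]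
    simp only [Finset.mul_sum, Finset.sum_mul, Finset.sum_div]
    refine Finset.sum_congr rfl fun l hl => ?_
    rw [e1, e2 z, hc]
    ring
  have hint : ∀ q l : ℕ, IntegrableOn
      (fun z => c q l * (z ^ (m+l) * Real.exp (-((((m+1:ℕ):ℝ) + (x₀:ℝ)*a)*z))))
      (Set.Ioi 0) volume :=
    fun q l => (integrable_moment (m+l) _ hCpos).const_mul _
  have hJ : ∫ z in Set.Ioi 0, g z = ∑ q ∈ Finset.range x₀, ∑ l ∈ Finset.range (q+1),
      c q l * (Real.Gamma ((m+l : ℕ)+1) / (((m+1:ℕ):ℝ) + (x₀:ℝ)*a) ^ ((m+l)+1)) := by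
    rw [setIntegral_congr_fun measurableSet_Ioi key,
      integral_finset_sum _ (fun q _ => integrable_finset_sum _ (fun l _ => hint q l))]
    refine Finset.sum_congr rfl fun q _ => ?_
    rw [integral_finset_sum _ (fun l _ => hint q l)]
    refine Finset.sum_congr rfl fun l _ => ?_
    rw [integral_const_mul, moment_integral (m+l) _ hCpos]
  rw [hI3, hJ]
  have hG : Real.Gamma ((m+1:ℕ):ℝ) = (Nat.factorial m : ℝ) := by
    rw [show ((m+1:ℕ):ℝ) = (m:ℝ)+1 by push_cast; ring, Real.Gamma_nat_eq_factorial]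
  rw [hG, Finset.mul_sum]
  refine Finset.sum_congr rfl fun q _ => ?_
  simp only [Finset.mul_sum]
  refine Finset.sum_congr rfl fun l _ => ?_
  rw [hc, show ((m+l:ℕ):ℝ)+1 = ((m+1:ℕ):ℝ)+(l:ℝ) by push_cast; ring]
  push_cast
  ring
end
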